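/- Let n and b be natural numbers with n ≥ 2 and b ≥ 2. Then for every k ∈ {1,…,b−2}, the number of tuples (t_1,…,t_(n+1)) ∈ R_b(n) with t_n = k equals (b^(n+1) − b)/(b−1), and the number of tuples (t_1,…,t_(n+1)) ∈ R_b(n) with t_n = b−1 equals b^n. -/

import Mathlib

/-- `R_b(n)`: tuples `(t_1,…,t_(n+1))` with entries in `{0,…,b}` (encoded as functions
`ℕ → ℕ` supported on `{1,…,n+1}`) such that: `t_(n+1) ≤ b−1`; if `t_j = b` then `t_i = 0`
for all `i < j`; if `t_(n+1) = b−1` then `t_n ≤ b−1`; and if `t_n = t_(n+1) = b−1` then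
`t_1 = ⋯ = t_(n−1) = 0`. -/
def Rb (b n : ℕ) (t : ℕ → ℕ) : Prop :=
  (∀ j, t j ≤ b) ∧
  (∀ j, j ∉ Finset.Icc 1 (n + 1) → t j = 0) ∧
  t (n + 1) ≤ b - 1 ∧
  (∀ j, t j = b → ∀ i < j, t i = 0) ∧
  (t (n + 1) = b - 1 → t n ≤ b - 1) ∧
  (t n = b - 1 → t (n + 1) = b - 1 → ∀ i, 1 ≤ i → i ≤ n - 1 → t i = 0)

noncomputable instance instDecEqFunNatNat : DecidableEq (ℕ → ℕ) := Classical.decEq _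

/-- Valid "prefix" strings of length `m`. -/
def Pre (b m : ℕ) (t : ℕ → ℕ) : Prop :=
  (∀ j, t j ≤ b) ∧ (∀ j, j ∉ Finset.Icc 1 m → t j = 0) ∧ (∀ j, t j = b → ∀ i < j, t i = 0)

noncomputable def Ffun (b : ℕ) : ℕ → Finset (ℕ → ℕ)
  | 0 => {fun _ => 0}
  | m + 1 =>
      ((Finset.range b).biUnion fun c =>
        (Ffun b m).image fun t => Function.update t (m + 1) c) ∪
      {Function.update (fun _ => 0) (m + 1) b}

lemma pre_zero (b m : ℕ) : Pre b m (fun _ => 0) :=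
  ⟨fun _ => Nat.zero_le _, fun _ _ => rfl, fun _ _ _ _ => rfl⟩

lemma pre_update (hb : 1 ≤ b) {m c : ℕ} {s : ℕ → ℕ} (hs : Pre b m s) (hc : c ≤ b)
    (hcb : c = b → ∀ i, s i = 0) : Pre b (m + 1) (Function.update s (m + 1) c) := by
  obtain ⟨hs1, hs2, hs3⟩ := hs
  refine ⟨?_, ?_, ?_⟩
  · intro j
    rw [Function.update_apply]
    split_ifs
    · exact hc
    · exact hs1 j
  · intro j hj
    simp only [Finset.mem_Icc] at hj
    rw [Function.update_apply, if_neg (by omega)]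
    exact hs2 j (by simp only [Finset.mem_Icc]; omega)
  · intro j hj i hij
    by_cases hjm : j = m + 1
    · subst hjm
      rw [Function.update_apply, if_pos rfl] at hj
      rw [Function.update_apply, if_neg (by omega)]
      exact hcb hj i
    · rw [Function.update_apply, if_neg hjm] at hj
      have hjm' : j ∈ Finset.Icc 1 m := by
        by_contra h; rw [hs2 j h] at hj; omega
      simp only [Finset.mem_Icc] at hjm'
      rw [Function.update_apply, if_neg (by omega)]
      exact hs3 j hj i hij

lemma pre_strip (hb : 1 ≤ b) {m : ℕ} {t : ℕ → ℕ} (ht : Pre b (m + 1) t) :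
    Pre b m (Function.update t (m + 1) 0) := by
  obtain ⟨h1, h2, h3⟩ := ht
  refine ⟨?_, ?_, ?_⟩
  · intro j
    rw [Function.update_apply]
    split_ifs
    · exact Nat.zero_le _
    · exact h1 j
  · intro j hj
    simp only [Finset.mem_Icc] at hj
    rw [Function.update_apply]
    split_ifs with h
    · rfl
    · exact h2 j (by simp only [Finset.mem_Icc]; omega)
  · intro j hj i hij
    rw [Function.update_apply] at hj
    split_ifs at hj with h
    · omega
    · rw [Function.update_apply]
      split_ifs with h'
      · rfl
      · exact h3 j hj i hij

lemma mem_Ffun (hb : 1 ≤ b) : ∀ (m : ℕ) (t : ℕ → ℕ), t ∈ Ffun b m ↔ Pre b m t := by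
  intro m
  induction m with
  | zero =>
    intro t
    simp only [Ffun, Finset.mem_singleton]
    constructor
    · rintro rfl; exact pre_zero b 0
    · rintro ⟨h1, h2, h3⟩
      funext j
      exact h2 j (by simp)
  | succ m ih =>
    intro t
    simp only [Ffun, Finset.mem_union, Finset.mem_biUnion, Finset.mem_image,
      Finset.mem_range, Finset.mem_singleton]
    constructor
    · rintro (⟨c, hc, s, hs, rfl⟩ | rfl)
      · exact pre_update hb ((ih s).1 hs) (by omega) (fun h => absurd h (by omega))
      · exact pre_update hb (pre_zero b m) le_rfl (fun _ _ => rfl)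
    · intro hp
      obtain ⟨h1, h2, h3⟩ := hp
      by_cases htb : t (m + 1) = b
      · right
        funext j
        rw [Function.update_apply]
        split_ifs with h
        · rw [h]; exact htb
        · rcases Nat.lt_or_ge j (m + 1) with h' | h'
          · exact h3 (m + 1) htb j h'
          · exact h2 j (by simp only [Finset.mem_Icc]; omega)
      · left
        refine ⟨t (m + 1), by have := h1 (m + 1); omega,
          Function.update t (m + 1) 0, (ih _).2 (pre_strip hb ⟨h1, h2, h3⟩), ?_⟩
        funext j
        rw [Function.update_apply, Function.update_apply]
        split_ifs with h
        · rw [h]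
        · rfl

lemma Ffun_apply_eq_zero (hb : 1 ≤ b) {m j : ℕ} {s : ℕ → ℕ} (hs : s ∈ Ffun b m)
    (hj : j ∉ Finset.Icc 1 m) : s j = 0 :=
  ((mem_Ffun hb m s).1 hs).2.1 j hj

lemma update2_injOn (hb : 1 ≤ b) {m k c p q : ℕ} (hp : p ∉ Finset.Icc 1 m)
    (hq : q ∉ Finset.Icc 1 m) :
    Set.InjOn (fun s : ℕ → ℕ => Function.update (Function.update s p k) q c) ↑(Ffun b m) := by
  intro s hs s' hs' h
  funext j
  by_cases hjp : j = p
  · rw [hjp, Ffun_apply_eq_zero hb (Finset.mem_coe.1 hs) hp,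
      Ffun_apply_eq_zero hb (Finset.mem_coe.1 hs') hp]
  · by_cases hjq : j = q
    · rw [hjq, Ffun_apply_eq_zero hb (Finset.mem_coe.1 hs) hq,
        Ffun_apply_eq_zero hb (Finset.mem_coe.1 hs') hq]
    · have := congrFun h j
      simpa [Function.update_apply, hjp, hjq] using this

lemma update_injOn (hb : 1 ≤ b) {m c p : ℕ} (hp : p ∉ Finset.Icc 1 m) :
    Set.InjOn (fun s : ℕ → ℕ => Function.update s p c) ↑(Ffun b m) := by
  intro s hs s' hs' h
  funext j
  by_cases hjp : j = p
  · rw [hjp, Ffun_apply_eq_zero hb (Finset.mem_coe.1 hs) hp,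
      Ffun_apply_eq_zero hb (Finset.mem_coe.1 hs') hp]
  · have := congrFun h j
    simpa [Function.update_apply, hjp] using this

lemma image_update2_disjoint {k k' c c' p q : ℕ} {A A' : Finset (ℕ → ℕ)}
    (hcc : c ≠ c') :
    Disjoint (A.image fun s => Function.update (Function.update s p k) q c)
      (A'.image fun s => Function.update (Function.update s p k') q c') := by
  rw [Finset.disjoint_left]
  rintro t ht ht'
  rw [Finset.mem_image] at ht ht'
  obtain ⟨s, _, rfl⟩ := ht
  obtain ⟨s', _, heq⟩ := ht'
  have := congrFun heq q
  simp only [Function.update_apply, if_pos rfl, if_true, eq_self_iff_true] at this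
  exact hcc this.symm

lemma card_Ffun (hb : 1 ≤ b) : ∀ m : ℕ, (Ffun b m).card * (b - 1) + 1 = b ^ (m + 1) := by
  intro m
  induction m with
  | zero =>
    simp only [Ffun, Finset.card_singleton, zero_add, pow_one]
    omega
  | succ m ih =>
    have hzero : (m + 1 : ℕ) ∉ Finset.Icc 1 m := by simp
    have hcard : (Ffun b (m + 1)).card = b * (Ffun b m).card + 1 := by
      show (((Finset.range b).biUnion fun c =>
          (Ffun b m).image fun t => Function.update t (m + 1) c) ∪
          {Function.update (fun _ => 0) (m + 1) b}).card = _
      rw [Finset.card_union_of_disjoint, Finset.card_biUnion, Finset.card_singleton]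
      · rw [Finset.sum_congr rfl (fun c _ =>
          Finset.card_image_of_injOn (update_injOn hb hzero))]
        rw [Finset.sum_const, Finset.card_range, smul_eq_mul]
      · intro c hc d hd hcd
        rw [Function.onFun, Finset.disjoint_left]
        rintro t ht ht'
        rw [Finset.mem_image] at ht ht'
        obtain ⟨s, _, rfl⟩ := ht
        obtain ⟨s', _, heq⟩ := ht'
        have := congrFun heq (m + 1)
        simp only [Function.update_apply, if_pos rfl, if_true, eq_self_iff_true] at this
        exact hcd this.symm
      · rw [Finset.disjoint_right]
        rintro t ht htb
        rw [Finset.mem_singleton] at ht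
        rw [Finset.mem_biUnion] at htb
        obtain ⟨c, hc, htb⟩ := htb
        rw [Finset.mem_image] at htb
        obtain ⟨s, _, heq⟩ := htb
        rw [ht] at heq
        have := congrFun heq (m + 1)
        simp only [Function.update_apply, if_pos rfl, if_true, eq_self_iff_true] at this
        rw [Finset.mem_range] at hc
        omega
    obtain ⟨b', rfl⟩ : ∃ b', b = b' + 1 := ⟨b - 1, by omega⟩
    rw [hcard]
    have hp : (b' + 1 : ℕ) ^ (m + 1 + 1) = (b' + 1) ^ (m + 1) * (b' + 1) := pow_succ _ _
    rw [hp, ← ih]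
    simp only [Nat.add_sub_cancel]
    ring

lemma rb_strip (hb : 1 ≤ b) {n : ℕ} (hn : 1 ≤ n) {t : ℕ → ℕ} (ht : Rb b n t) :
    Pre b (n - 1) (Function.update (Function.update t n 0) (n + 1) 0) := by
  obtain ⟨h1, h2, _, h4, _, _⟩ := ht
  refine ⟨?_, ?_, ?_⟩
  · intro j
    simp only [Function.update_apply]
    split_ifs
    · exact Nat.zero_le _
    · exact Nat.zero_le _
    · exact h1 j
  · intro j hj
    simp only [Finset.mem_Icc] at hj
    simp only [Function.update_apply]
    split_ifs
    · rfl
    · rfl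
    · exact h2 j (by simp only [Finset.mem_Icc]; omega)
  · intro j hj i hij
    simp only [Function.update_apply] at hj ⊢
    split_ifs at hj with hj1 hj2
    · omega
    · omega
    · have hjIcc : j ∈ Finset.Icc 1 (n + 1) := by
        by_contra h; rw [h2 j h] at hj; omega
      simp only [Finset.mem_Icc] at hjIcc
      split_ifs with hi1 hi2
      · rfl
      · rfl
      · exact h4 j hj i hij

lemma rb_build (hb : 2 ≤ b) {n : ℕ} (hn : 2 ≤ n) {s : ℕ → ℕ} (hs : Pre b (n - 1) s)
    {k c : ℕ} (hk' : k ≤ b - 1) (hc : c ≤ b - 1)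
    (h6 : k = b - 1 → c = b - 1 → ∀ i, s i = 0) :
    Rb b n (Function.update (Function.update s n k) (n + 1) c) := by
  obtain ⟨h1, h2, h3⟩ := hs
  refine ⟨?_, ?_, ?_, ?_, ?_, ?_⟩
  · intro j
    simp only [Function.update_apply]
    split_ifs
    · omega
    · omega
    · exact h1 j
  · intro j hj
    simp only [Finset.mem_Icc] at hj
    simp only [Function.update_apply]
    rw [if_neg (by omega), if_neg (by omega)]
    exact h2 j (by simp only [Finset.mem_Icc]; omega)
  · simp only [Function.update_apply]
    split_ifs <;> omega
  · intro j hj i hij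
    simp only [Function.update_apply] at hj ⊢
    split_ifs at hj with hj1 hj2
    · omega
    · omega
    · have hjIcc : j ∈ Finset.Icc 1 (n - 1) := by
        by_contra h; rw [h2 j h] at hj; omega
      simp only [Finset.mem_Icc] at hjIcc
      split_ifs with hi1 hi2
      · omega
      · omega
      · exact h3 j hj i hij
  · intro _
    simp only [Function.update_apply]
    split_ifs <;> omega
  · intro hkn hcn i hi1 hi2
    have hkk : k = b - 1 := by
      simp only [Function.update_apply] at hkn
      split_ifs at hkn <;> omega
    have hcc : c = b - 1 := by
      simp only [Function.update_apply] at hcn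
      split_ifs at hcn <;> omega
    simp only [Function.update_apply]
    split_ifs with hA hB
    · omega
    · omega
    · exact h6 hkk hcc i

lemma rb_decomp {n : ℕ} (t : ℕ → ℕ) :
    t = Function.update (Function.update
      (Function.update (Function.update t n 0) (n + 1) 0) n (t n)) (n + 1) (t (n + 1)) := by
  funext j
  simp only [Function.update_apply]
  split_ifs with h1 h2
  · rw [h1]
  · rw [h2]
  · rfl

theorem Rb_count_fixed_nth (n b : ℕ) (hn : 2 ≤ n) (hb : 2 ≤ b) :
    (∀ k, 1 ≤ k → k ≤ b - 2 →
      Set.ncard {t : ℕ → ℕ | Rb b n t ∧ t n = k} = (b ^ (n + 1) - b) / (b - 1)) ∧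
    Set.ncard {t : ℕ → ℕ | Rb b n t ∧ t n = b - 1} = b ^ n := by
  have hb1 : 1 ≤ b := by omega
  have hn1 : 1 ≤ n := by omega
  set A := Ffun b (n - 1) with hA
  have hnIcc : n ∉ Finset.Icc 1 (n - 1) := by simp only [Finset.mem_Icc]; omega
  have hn1Icc : (n + 1 : ℕ) ∉ Finset.Icc 1 (n - 1) := by simp only [Finset.mem_Icc]; omega
  have hAcard : A.card * (b - 1) + 1 = b ^ n := by
    have := card_Ffun hb1 (n - 1)
    rwa [show n - 1 + 1 = n by omega] at this
  constructor
  · intro k hk1 hk2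
    set G : Finset (ℕ → ℕ) := (Finset.range b).biUnion fun c =>
      A.image fun s => Function.update (Function.update s n k) (n + 1) c with hG
    have hset : {t : ℕ → ℕ | Rb b n t ∧ t n = k} = ↑G := by
      ext t
      simp only [Set.mem_setOf_eq, Finset.mem_coe, hG, Finset.mem_biUnion,
        Finset.mem_image, Finset.mem_range]
      constructor
      · rintro ⟨ht, htn⟩
        refine ⟨t (n + 1), by have := ht.2.2.1; omega,
          Function.update (Function.update t n 0) (n + 1) 0,
          (mem_Ffun hb1 _ _).2 (rb_strip hb1 hn1 ht), ?_⟩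
        rw [← htn]
        exact (rb_decomp t).symm
      · rintro ⟨c, hc, s, hs, rfl⟩
        have hsPre := (mem_Ffun hb1 _ s).1 hs
        constructor
        · exact rb_build hb hn hsPre (by omega) (by omega)
            (fun h => absurd h (by omega))
        · simp only [Function.update_apply]
          split_ifs <;> omega
    rw [hset, Set.ncard_coe_finset]
    have hGcard : G.card = b * A.card := by
      rw [hG, Finset.card_biUnion (fun c _ d _ hcd => image_update2_disjoint hcd)]
      rw [Finset.sum_congr rfl (fun c _ =>
        Finset.card_image_of_injOn (update2_injOn hb1 hnIcc hn1Icc))]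
      rw [Finset.sum_const, Finset.card_range, smul_eq_mul]
    rw [hGcard]
    have hpow : b ^ (n + 1) = b * A.card * (b - 1) + b := by
      have h : b ^ (n + 1) = b * b ^ n := by ring
      rw [h, ← hAcard]
      obtain ⟨b', rfl⟩ : ∃ b', b = b' + 1 := ⟨b - 1, by omega⟩
      simp only [Nat.add_sub_cancel]
      ring
    have h2 : b ^ (n + 1) - b = b * A.card * (b - 1) := by omega
    rw [h2, Nat.mul_div_cancel _ (by omega : 0 < b - 1)]
  · set e : ℕ → ℕ := Function.update (Function.update (fun _ => 0) n (b - 1)) (n + 1) (b - 1)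
      with he
    set G : Finset (ℕ → ℕ) := ((Finset.range (b - 1)).biUnion fun c =>
      A.image fun s => Function.update (Function.update s n (b - 1)) (n + 1) c) ∪ {e} with hG
    have hset : {t : ℕ → ℕ | Rb b n t ∧ t n = b - 1} = ↑G := by
      ext t
      simp only [Set.mem_setOf_eq, Finset.mem_coe, hG, Finset.mem_union, Finset.mem_biUnion,
        Finset.mem_image, Finset.mem_range, Finset.mem_singleton]
      constructor
      · rintro ⟨ht, htn⟩
        by_cases hlast : t (n + 1) = b - 1
        · right
          obtain ⟨_, h2, _, _, _, hz⟩ := ht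
          funext j
          rw [he]
          simp only [Function.update_apply]
          split_ifs with hj1 hj2
          · rw [hj1]; exact hlast
          · rw [hj2]; exact htn
          · rcases Nat.lt_or_ge j 1 with h | h
            · exact h2 j (by simp only [Finset.mem_Icc]; omega)
            · rcases Nat.lt_or_ge j n with h' | h'
              · exact hz htn hlast j h (by omega)
              · exact h2 j (by simp only [Finset.mem_Icc]; omega)
        · left
          refine ⟨t (n + 1), by have := ht.2.2.1; omega,
            Function.update (Function.update t n 0) (n + 1) 0,
            (mem_Ffun hb1 _ _).2 (rb_strip hb1 hn1 ht), ?_⟩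
          rw [← htn]
          exact (rb_decomp t).symm
      · rintro (⟨c, hc, s, hs, rfl⟩ | rfl)
        · have hsPre := (mem_Ffun hb1 _ s).1 hs
          constructor
          · exact rb_build hb hn hsPre le_rfl (by omega)
              (fun _ h => absurd h (by omega))
          · simp only [Function.update_apply]
            split_ifs <;> omega
        · constructor
          · rw [he]
            exact rb_build hb hn (pre_zero b (n - 1)) le_rfl le_rfl (fun _ _ _ => rfl)
          · rw [he]
            simp only [Function.update_apply]
            split_ifs <;> omega
    rw [hset, Set.ncard_coe_finset]
    have hGcard : G.card = (b - 1) * A.card + 1 := by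
      rw [hG, Finset.card_union_of_disjoint, Finset.card_biUnion
        (fun c _ d _ hcd => image_update2_disjoint hcd), Finset.card_singleton]
      · rw [Finset.sum_congr rfl (fun c _ =>
          Finset.card_image_of_injOn (update2_injOn hb1 hnIcc hn1Icc))]
        rw [Finset.sum_const, Finset.card_range, smul_eq_mul]
      · rw [Finset.disjoint_right]
        rintro t ht htb
        rw [Finset.mem_singleton] at ht
        rw [Finset.mem_biUnion] at htb
        obtain ⟨c, hc, htb⟩ := htb
        rw [Finset.mem_image] at htb
        obtain ⟨s, _, heq⟩ := htb
        rw [ht, he] at heq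
        have := congrFun heq (n + 1)
        simp only [Function.update_apply, if_pos rfl, if_true, eq_self_iff_true] at this
        rw [Finset.mem_range] at hc
        omega
    rw [hGcard, mul_comm]
    exact hAcard
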